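/- Let R = {0,b₁}×⋯×{0,bₛ} ⊆ ℝˢ be a cuboid, and let a₁,…,aₜ be positive reals with aᵢ ≤ min{b₁,…,bₛ} for each i. Then there exist a positive integer N and a configuration S ⊆ ℝᴺ such that every colouring of S (with arbitrarily many colours) admits either a monochromatic copy of the cuboid {0,a₁}×⋯×{0,aₜ} or a rainbow copy of R. -/

import Mathlib

/-- A copy of a configuration `C ⊆ ℝˢ` in `ℝⁿ`: the image of `C` under a
distance-preserving map `ℝˢ → ℝⁿ`. -/
def IsCopy {s n : ℕ} (C : Set (EuclideanSpace ℝ (Fin s)))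
    (X : Set (EuclideanSpace ℝ (Fin n))) : Prop :=
  ∃ f : EuclideanSpace ℝ (Fin s) → EuclideanSpace ℝ (Fin n), Isometry f ∧ X = f '' C

/-- A set `X` is monochromatic under a colouring `χ` if all its points receive
the same colour. -/
def Monochromatic {α κ : Type*} (χ : α → κ) (X : Set α) : Prop :=
  ∀ x ∈ X, ∀ y ∈ X, χ x = χ y

/-- A set `X` is rainbow under a colouring `χ` if all its points receive
pairwise distinct colours. -/
def RainbowSet {α κ : Type*} (χ : α → κ) (X : Set α) : Prop :=
  Set.InjOn χ X

/-- The cuboid `{0, b 0} × ⋯ × {0, b (s-1)} ⊆ ℝˢ`. -/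
def cuboid {s : ℕ} (b : Fin s → ℝ) : Set (EuclideanSpace ℝ (Fin s)) :=
  {x | ∀ i, x i = 0 ∨ x i = b i}

/-- A configuration is canonically Ramsey if some `ℝⁿ` admits, for every colouring
with arbitrarily many colours, a monochromatic or rainbow copy of it. -/
def CanonicallyRamsey {s : ℕ} (C : Set (EuclideanSpace ℝ (Fin s))) : Prop :=
  ∃ n : ℕ, 0 < n ∧ ∀ (κ : Type) (χ : EuclideanSpace ℝ (Fin n) → κ),
    ∃ X : Set (EuclideanSpace ℝ (Fin n)), IsCopy C X ∧ (Monochromatic χ X ∨ RainbowSet χ X)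

/-- A configuration is Ramsey if for every number of colours `r` there is `n` such
that every `r`-colouring of `ℝⁿ` admits a monochromatic copy of it. -/
def IsRamsey {s : ℕ} (C : Set (EuclideanSpace ℝ (Fin s))) : Prop :=
  ∀ r : ℕ, 0 < r → ∃ n : ℕ, ∀ χ : EuclideanSpace ℝ (Fin n) → Fin r,
    ∃ X : Set (EuclideanSpace ℝ (Fin n)), IsCopy C X ∧ Monochromatic χ X


open Finset

noncomputable def conc {m n : ℕ} (x : EuclideanSpace ℝ (Fin m)) (y : EuclideanSpace ℝ (Fin n)) :
    EuclideanSpace ℝ (Fin (m + n)) :=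
  WithLp.toLp 2 (fun i => Fin.addCases (fun j => x j) (fun j => y j) i)

lemma dist_conc {m n : ℕ} (x x' : EuclideanSpace ℝ (Fin m)) (y y' : EuclideanSpace ℝ (Fin n)) :
    dist (conc x y) (conc x' y') = Real.sqrt (dist x x' ^ 2 + dist y y' ^ 2) := by
  rw [EuclideanSpace.dist_eq, EuclideanSpace.dist_eq, EuclideanSpace.dist_eq,
    Real.sq_sqrt (by positivity), Real.sq_sqrt (by positivity), Fin.sum_univ_add]
  congr 1
  congr 1
  · exact Finset.sum_congr rfl fun i _ => by simp [conc]
  · exact Finset.sum_congr rfl fun i _ => by simp [conc]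

lemma isometry_conc_right {m n : ℕ} (y : EuclideanSpace ℝ (Fin n)) :
    Isometry (fun x : EuclideanSpace ℝ (Fin m) => conc x y) :=
  Isometry.of_dist_eq fun a b => by
    rw [dist_conc]; simp [Real.sqrt_sq dist_nonneg]

lemma isometry_conc_left {m n : ℕ} (x : EuclideanSpace ℝ (Fin m)) :
    Isometry (fun y : EuclideanSpace ℝ (Fin n) => conc x y) :=
  Isometry.of_dist_eq fun a b => by
    rw [dist_conc]; simp [Real.sqrt_sq dist_nonneg]

lemma conc_inj_left {m n : ℕ} (y : EuclideanSpace ℝ (Fin n)) :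
    Function.Injective (fun x : EuclideanSpace ℝ (Fin m) => conc x y) :=
  (isometry_conc_right y).injective

lemma IsCopy.image_isometry {s n N : ℕ} {C : Set (EuclideanSpace ℝ (Fin s))}
    {X : Set (EuclideanSpace ℝ (Fin n))} (h : IsCopy C X)
    {g : EuclideanSpace ℝ (Fin n) → EuclideanSpace ℝ (Fin N)} (hg : Isometry g) :
    IsCopy C (g '' X) := by
  obtain ⟨f, hf, rfl⟩ := h
  exact ⟨g ∘ f, hg.comp hf, (Set.image_comp g f C).symm⟩


lemma pig (d : ℕ) (t : ℕ) (κ₀ : Type) [Fintype κ₀] :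
    ∃ n : Fin d → ℕ, (∀ c, 0 < n c) ∧
      ∀ χ : ((∀ c, Fin (n c)) → κ₀),
        ∃ A : ∀ c, Finset (Fin (n c)),
          (∀ c, t ≤ (A c).card) ∧
          ∀ f g : (∀ c, Fin (n c)), (∀ c, f c ∈ A c) → (∀ c, g c ∈ A c) → χ f = χ g := by
  classical
  induction d with
  | zero =>
      refine ⟨Fin.elim0, fun c => c.elim0, fun χ => ⟨fun c => c.elim0, fun c => c.elim0, ?_⟩⟩
      intro f g _ _
      have : f = g := funext fun c => c.elim0
      rw [this]
  | succ d ih =>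
      obtain ⟨nr, hnrpos, hnr⟩ := ih
      set n₀ : ℕ := Fintype.card ((∀ c, Fin (nr c)) → κ₀) * t + 1 with hn₀
      refine ⟨Fin.cons n₀ nr, ?_, ?_⟩
      · intro c
        refine Fin.cases ?_ ?_ c
        · simp [hn₀]
        · intro i; simpa using hnrpos i
      · intro χ
        set g : Fin n₀ → ((∀ c, Fin (nr c)) → κ₀) :=
          fun x₀ rest => χ (Fin.cons x₀ rest) with hg
        have hcard : Fintype.card ((∀ c, Fin (nr c)) → κ₀) * t < Fintype.card (Fin n₀) := by
          simp [hn₀]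
        obtain ⟨y, hy⟩ := Fintype.exists_lt_card_fiber_of_mul_lt_card g hcard
        obtain ⟨A, hAcard, hA⟩ := hnr y
        refine ⟨Fin.cons (Finset.univ.filter fun x => g x = y) A, ?_, ?_⟩
        · intro c
          refine Fin.cases ?_ ?_ c
          · exact hy.le
          · intro i; exact hAcard i
        · intro f f' hf hf'
          have hf0 : g (f 0) = y := by
            have := hf 0
            change f 0 ∈ Finset.univ.filter (fun x => g x = y) at this
            exact (Finset.mem_filter.mp this).2
          have hf'0 : g (f' 0) = y := by
            have := hf' 0
            change f' 0 ∈ Finset.univ.filter (fun x => g x = y) at this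
            exact (Finset.mem_filter.mp this).2
          have htail : ∀ c, Fin.tail f c ∈ A c := by
            intro c
            exact hf c.succ
          have htail' : ∀ c, Fin.tail f' c ∈ A c := by
            intro c
            exact hf' c.succ
          calc χ f = χ (Fin.cons (f 0) (Fin.tail f)) := by rw [Fin.cons_self_tail]
            _ = y (Fin.tail f) := by rw [← hf0]
            _ = y (Fin.tail f') := hA _ _ htail htail'
            _ = χ (Fin.cons (f' 0) (Fin.tail f')) := by rw [← hf'0]
            _ = χ f' := by rw [Fin.cons_self_tail]


section core
variable {s : ℕ} (b : Fin s → ℝ) (α : ℝ) (n : Fin (s + s) → ℕ)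

/-- Squared-distance contribution of each coordinate-block. -/
noncomputable def Dv : Fin (s + s) → ℝ :=
  Fin.addCases (fun j => b j ^ 2 - α ^ 2) fun _ => α ^ 2

/-- Which of the `s` blocks a coordinate belongs to. -/
def blk : Fin (s + s) → Fin s := Fin.addCases id id

noncomputable def gam (c : Fin (s + s)) : ℝ := Real.sqrt (Dv b α c / 2)

/-- The grid points. -/
noncomputable def pt (f : ∀ c, Fin (n c)) :
    EuclideanSpace ℝ (Σ c : Fin (s + s), Fin (n c)) :=
  WithLp.toLp 2 (fun ci : (Σ c : Fin (s + s), Fin (n c)) => if ci.2 = f ci.1 then gam b α ci.1 else 0)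

lemma blk_natAdd (j : Fin s) : blk (Fin.natAdd s j) = j := by
  unfold blk; rw [Fin.addCases_right]; rfl

lemma blk_castAdd (j : Fin s) : blk (Fin.castAdd s j) = j := by
  unfold blk; rw [Fin.addCases_left]; rfl

lemma Dv_natAdd (j : Fin s) : Dv b α (Fin.natAdd s j) = α ^ 2 := by
  unfold Dv; rw [Fin.addCases_right]

lemma Dv_castAdd (j : Fin s) : Dv b α (Fin.castAdd s j) = b j ^ 2 - α ^ 2 := by
  unfold Dv; rw [Fin.addCases_left]

lemma Dv_nonneg (hb : ∀ j, 0 < b j) (hα : 0 < α) (hαb : ∀ j, α ≤ b j) (c : Fin (s + s)) :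
    0 ≤ Dv b α c := by
  refine Fin.addCases (motive := fun c => 0 ≤ Dv b α c) (fun j => ?_) (fun j => ?_) c
  · show 0 ≤ Dv b α (Fin.castAdd s j)
    rw [Dv_castAdd]
    have : α ^ 2 ≤ b j ^ 2 := by
      apply pow_le_pow_left₀ hα.le (hαb j)
    linarith
  · show 0 ≤ Dv b α (Fin.natAdd s j)
    rw [Dv_natAdd]; positivity

lemma gam_sq (hb : ∀ j, 0 < b j) (hα : 0 < α) (hαb : ∀ j, α ≤ b j) (c : Fin (s + s)) :
    gam b α c ^ 2 = Dv b α c / 2 :=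
  Real.sq_sqrt (by linarith [Dv_nonneg b α hb hα hαb c])

lemma dist_pt (hb : ∀ j, 0 < b j) (hα : 0 < α) (hαb : ∀ j, α ≤ b j)
    (f g : ∀ c, Fin (n c)) :
    dist (pt b α n f) (pt b α n g) =
      Real.sqrt (∑ c, if f c = g c then 0 else Dv b α c) := by
  classical
  rw [EuclideanSpace.dist_eq]
  congr 1
  rw [← Finset.univ_sigma_univ, Finset.sum_sigma]
  refine Finset.sum_congr rfl fun c _ => ?_
  by_cases h : f c = g c
  · simp only [h, if_true]
    refine Finset.sum_eq_zero fun i _ => ?_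
    simp [pt, h]
  · simp only [h, if_false]
    have hz : ∀ i ∈ (Finset.univ : Finset (Fin (n c))), i ∉ ({f c, g c} : Finset (Fin (n c))) →
        dist (pt b α n f ⟨c, i⟩) (pt b α n g ⟨c, i⟩) ^ 2 = 0 := by
      intro i _ hi
      simp only [Finset.mem_insert, Finset.mem_singleton, not_or] at hi
      simp [pt, hi.1, hi.2]
    rw [← Finset.sum_subset (Finset.subset_univ ({f c, g c} : Finset (Fin (n c)))) hz,
      Finset.sum_pair h]
    have h1 : dist (pt b α n f ⟨c, f c⟩) (pt b α n g ⟨c, f c⟩) ^ 2 = gam b α c ^ 2 := by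
      simp [pt, h, Real.dist_eq, sq_abs]
    have h2 : dist (pt b α n f ⟨c, g c⟩) (pt b α n g ⟨c, g c⟩) ^ 2 = gam b α c ^ 2 := by
      simp only [pt, PiLp.toLp_apply, Real.dist_eq, sq_abs]
      rw [if_neg (fun hh : g c = f c => h hh.symm), if_pos trivial]
      ring
    rw [h1, h2, gam_sq b α hb hα hαb c]
    ring

lemma dist_pt_single (hb : ∀ j, 0 < b j) (hα : 0 < α) (hαb : ∀ j, α ≤ b j)
    (f g : ∀ c, Fin (n c)) (j₀ : Fin s)
    (hne : f (Fin.natAdd s j₀) ≠ g (Fin.natAdd s j₀))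
    (heq : ∀ c, c ≠ Fin.natAdd s j₀ → f c = g c) :
    dist (pt b α n f) (pt b α n g) = α := by
  classical
  rw [dist_pt b α n hb hα hαb f g]
  have : (∑ c, if f c = g c then 0 else Dv b α c) = Dv b α (Fin.natAdd s j₀) := by
    rw [Finset.sum_eq_single (Fin.natAdd s j₀)]
    · simp [hne]
    · intro c _ hc
      simp [heq c hc]
    · intro h; exact absurd (Finset.mem_univ _) h
  rw [this, Dv_natAdd, Real.sqrt_sq hα.le]

end core

section bmap
variable {s : ℕ} (b : Fin s → ℝ) (α : ℝ) (n : Fin (s + s) → ℕ)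

noncomputable def bmap (e0 e1 : ∀ c, Fin (n c)) (x : EuclideanSpace ℝ (Fin s)) :
    EuclideanSpace ℝ (Σ c : Fin (s + s), Fin (n c)) :=
  WithLp.toLp 2 (fun ci : (Σ c : Fin (s + s), Fin (n c)) => pt b α n e0 ci +
    (x (blk ci.1) / b (blk ci.1)) * (pt b α n e1 ci - pt b α n e0 ci))

def vmap (e0 e1 : ∀ c, Fin (n c)) (ε : Fin s → Bool) : ∀ c, Fin (n c) :=
  fun c => if ε (blk c) then e1 c else e0 c

lemma sum_sq_pt_diff (hb : ∀ j, 0 < b j) (hα : 0 < α) (hαb : ∀ j, α ≤ b j)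
    (e0 e1 : ∀ c, Fin (n c)) (c : Fin (s + s)) (hne : e0 c ≠ e1 c) :
    ∑ i : Fin (n c), (pt b α n e1 ⟨c, i⟩ - pt b α n e0 ⟨c, i⟩) ^ 2 = Dv b α c := by
  classical
  have hz : ∀ i ∈ (Finset.univ : Finset (Fin (n c))), i ∉ ({e0 c, e1 c} : Finset (Fin (n c))) →
      (pt b α n e1 ⟨c, i⟩ - pt b α n e0 ⟨c, i⟩) ^ 2 = 0 := by
    intro i _ hi
    simp only [Finset.mem_insert, Finset.mem_singleton, not_or] at hi
    simp [pt, hi.1, hi.2]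
  rw [← Finset.sum_subset (Finset.subset_univ ({e0 c, e1 c} : Finset (Fin (n c)))) hz,
    Finset.sum_pair hne]
  have h1 : (pt b α n e1 ⟨c, e0 c⟩ - pt b α n e0 ⟨c, e0 c⟩) ^ 2 = gam b α c ^ 2 := by
    simp only [pt, PiLp.toLp_apply]
    rw [if_neg (fun hh : e0 c = e1 c => hne hh), if_pos trivial]
    ring
  have h2 : (pt b α n e1 ⟨c, e1 c⟩ - pt b α n e0 ⟨c, e1 c⟩) ^ 2 = gam b α c ^ 2 := by
    simp only [pt, PiLp.toLp_apply]
    rw [if_neg (fun hh : e1 c = e0 c => hne hh.symm), if_pos trivial]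
    ring
  rw [h1, h2, gam_sq b α hb hα hαb c]
  ring

lemma bmap_isometry (hb : ∀ j, 0 < b j) (hα : 0 < α) (hαb : ∀ j, α ≤ b j)
    (e0 e1 : ∀ c, Fin (n c)) (hne : ∀ c, e0 c ≠ e1 c) :
    Isometry (bmap b α n e0 e1) := by
  classical
  refine Isometry.of_dist_eq fun x y => ?_
  rw [EuclideanSpace.dist_eq, EuclideanSpace.dist_eq]
  congr 1
  rw [← Finset.univ_sigma_univ, Finset.sum_sigma]
  have key : ∀ c : Fin (s + s), ∑ i : Fin (n c),
      dist (bmap b α n e0 e1 x ⟨c, i⟩) (bmap b α n e0 e1 y ⟨c, i⟩) ^ 2 =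
      ((x (blk c) - y (blk c)) / b (blk c)) ^ 2 * Dv b α c := by
    intro c
    rw [← sum_sq_pt_diff b α n hb hα hαb e0 e1 c (hne c), Finset.mul_sum]
    refine Finset.sum_congr rfl fun i _ => ?_
    rw [Real.dist_eq, sq_abs]
    simp only [bmap, PiLp.toLp_apply]
    ring
  rw [Finset.sum_congr rfl fun c _ => key c, Fin.sum_univ_add]
  have hL : ∀ j : Fin s,
      ((x (blk (Fin.castAdd s j)) - y (blk (Fin.castAdd s j))) / b (blk (Fin.castAdd s j))) ^ 2 *
        Dv b α (Fin.castAdd s j) = ((x j - y j) / b j) ^ 2 * (b j ^ 2 - α ^ 2) := by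
    intro j; rw [blk_castAdd, Dv_castAdd]
  have hR : ∀ j : Fin s,
      ((x (blk (Fin.natAdd s j)) - y (blk (Fin.natAdd s j))) / b (blk (Fin.natAdd s j))) ^ 2 *
        Dv b α (Fin.natAdd s j) = ((x j - y j) / b j) ^ 2 * α ^ 2 := by
    intro j; rw [blk_natAdd, Dv_natAdd]
  rw [Finset.sum_congr rfl fun j _ => hL j, Finset.sum_congr rfl fun j _ => hR j,
    ← Finset.sum_add_distrib]
  refine Finset.sum_congr rfl fun j _ => ?_
  rw [Real.dist_eq, sq_abs]
  have hbj : b j ≠ 0 := (hb j).ne'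
  field_simp
  ring

lemma bmap_image (hb : ∀ j, 0 < b j)
    (e0 e1 : ∀ c, Fin (n c)) :
    bmap b α n e0 e1 '' cuboid b = Set.range (fun ε => pt b α n (vmap n e0 e1 ε)) := by
  classical
  have key : ∀ x : EuclideanSpace ℝ (Fin s), (∀ j, x j = 0 ∨ x j = b j) →
      bmap b α n e0 e1 x = pt b α n (vmap n e0 e1 (fun j => decide (x j = b j))) := by
    intro x hx
    ext ci
    rcases hx (blk ci.1) with h0 | h1
    · have hd : (decide (x (blk ci.1) = b (blk ci.1))) = false := by
        rw [h0]; simp [(hb (blk ci.1)).ne]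
      have : vmap n e0 e1 (fun j => decide (x j = b j)) ci.1 = e0 ci.1 := by
        simp [vmap, hd]
      show pt b α n e0 ci + (x (blk ci.1) / b (blk ci.1)) * (pt b α n e1 ci - pt b α n e0 ci)
        = pt b α n (vmap n e0 e1 (fun j => decide (x j = b j))) ci
      rw [h0]
      simp only [pt, PiLp.toLp_apply, this]
      ring
    · have hd : (decide (x (blk ci.1) = b (blk ci.1))) = true := by
        rw [h1]; simp
      have : vmap n e0 e1 (fun j => decide (x j = b j)) ci.1 = e1 ci.1 := by
        simp [vmap, hd]
      show pt b α n e0 ci + (x (blk ci.1) / b (blk ci.1)) * (pt b α n e1 ci - pt b α n e0 ci)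
        = pt b α n (vmap n e0 e1 (fun j => decide (x j = b j))) ci
      rw [h1]
      simp only [pt, PiLp.toLp_apply, this]
      field_simp [(hb (blk ci.1)).ne']
      ring
  apply Set.eq_of_subset_of_subset
  · rintro p ⟨x, hx, rfl⟩
    exact ⟨fun j => decide (x j = b j), (key x hx).symm⟩
  · rintro p ⟨ε, rfl⟩
    refine ⟨WithLp.toLp 2 (fun j => if ε j then b j else 0), fun j => ?_, ?_⟩
    · by_cases h : ε j
      · simp [h]
      · simp [h]
    · have hx : ∀ j, (if ε j then b j else 0) = 0 ∨ (if ε j then b j else 0) = b j := fun j => by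
        by_cases h : ε j <;> simp [h]
      have hdec : (fun j => decide ((if ε j = true then b j else 0) = b j)) = ε := by
        funext j
        by_cases h : ε j
        · simp [h]
        · simp [h, (hb j).ne]
      rw [key (WithLp.toLp 2 (fun j => if ε j then b j else 0)) hx]
      exact congrArg (fun e => pt b α n (vmap n e0 e1 e)) hdec
  end bmap

lemma lemA_core (s : ℕ) (b : Fin s → ℝ) (hb : ∀ j, 0 < b j) (α : ℝ) (hα : 0 < α)
    (hαb : ∀ j, α ≤ b j) (κ₀ : Type) [Fintype κ₀] :
    ∃ n : Fin (s + s) → ℕ, (∀ c, 0 < n c) ∧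
      ∀ (χ₀ : EuclideanSpace ℝ ((c : Fin (s + s)) × Fin (n c)) → κ₀) (κ : Type)
        (χ : EuclideanSpace ℝ ((c : Fin (s + s)) × Fin (n c)) → κ),
        (∃ f g : ∀ c, Fin (n c), dist (pt b α n f) (pt b α n g) = α ∧
          χ₀ (pt b α n f) = χ₀ (pt b α n g) ∧ χ (pt b α n f) = χ (pt b α n g)) ∨
        (∃ F : EuclideanSpace ℝ (Fin s) → EuclideanSpace ℝ ((c : Fin (s + s)) × Fin (n c)),
          Isometry F ∧ F '' cuboid b ⊆ Set.range (pt b α n) ∧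
          Monochromatic χ₀ (F '' cuboid b) ∧ RainbowSet χ (F '' cuboid b)) := by
  classical
  obtain ⟨n, hnpos, hpig⟩ := pig (s + s) (Fintype.card ((Fin s → Bool) × (Fin s → Bool)) + 2) κ₀
  refine ⟨n, hnpos, ?_⟩
  intro χ₀ κ χ
  by_cases hLft : ∃ f g : ∀ c, Fin (n c), dist (pt b α n f) (pt b α n g) = α ∧
      χ₀ (pt b α n f) = χ₀ (pt b α n g) ∧ χ (pt b α n f) = χ (pt b α n g)
  · exact Or.inl hLft
  right
  push_neg at hLft
  obtain ⟨A, hAcard, hAconst⟩ := hpig (fun f => χ₀ (pt b α n f))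
  have hA2 : ∀ c, ∃ u ∈ A c, ∃ v ∈ A c, u ≠ v := by
    intro c
    rw [← Finset.one_lt_card]
    have := hAcard c
    omega
  choose E0 hE0 E1 hE1 hE01 using hA2
  set K : Finset ((∀ c, Fin (n c)) × (∀ c, Fin (n c))) :=
    Finset.univ.filter (fun q => ∀ c, q.1 c ∈ A c ∧ q.2 c ∈ A c ∧ q.1 c ≠ q.2 c) with hK
  have hKmem : ∀ {q : (∀ c, Fin (n c)) × (∀ c, Fin (n c))},
      q ∈ K ↔ ∀ c, q.1 c ∈ A c ∧ q.2 c ∈ A c ∧ q.1 c ≠ q.2 c := by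
    intro q; simp [hK]
  have hKne : (⟨E0, E1⟩ : (∀ c, Fin (n c)) × (∀ c, Fin (n c))) ∈ K :=
    hKmem.mpr fun c => ⟨hE0 c, hE1 c, hE01 c⟩
  have hvmem : ∀ q ∈ K, ∀ ε : Fin s → Bool, ∀ c, vmap n q.1 q.2 ε c ∈ A c := by
    intro q hq ε c
    have h := hKmem.mp hq c
    simp only [vmap]
    by_cases hε : ε (blk c) = true
    · rw [if_pos hε]; exact h.2.1
    · rw [if_neg hε]; exact h.1
  set B : Finset ((∀ c, Fin (n c)) × (∀ c, Fin (n c))) := K.filter (fun q =>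
    ∃ ε ε' : Fin s → Bool, ε ≠ ε' ∧
      χ (pt b α n (vmap n q.1 q.2 ε)) = χ (pt b α n (vmap n q.1 q.2 ε'))) with hB
  set PrAll : Finset ((Fin s → Bool) × (Fin s → Bool)) :=
    Finset.univ.filter (fun p => ∃ j, p.1 j = true ∧ p.2 j = false) with hPrAll
  set B' : ((Fin s → Bool) × (Fin s → Bool)) → Finset ((∀ c, Fin (n c)) × (∀ c, Fin (n c))) :=
    fun p => K.filter (fun q =>
      χ (pt b α n (vmap n q.1 q.2 p.1)) = χ (pt b α n (vmap n q.1 q.2 p.2))) with hB'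
  have hcover : B ⊆ PrAll.biUnion B' := by
    intro q hq
    rw [hB, Finset.mem_filter] at hq
    obtain ⟨hqK, ε, ε', hne, heq⟩ := hq
    have hj : ∃ j, ε j ≠ ε' j := by
      by_contra hco; push_neg at hco; exact hne (funext hco)
    obtain ⟨j, hj⟩ := hj
    rcases Bool.eq_false_or_eq_true (ε j) with hεj | hεj
    · have hε'j : ε' j = false := by
        cases hε'j : ε' j
        · rfl
        · exact absurd (hεj.trans hε'j.symm) hj
      refine Finset.mem_biUnion.mpr ⟨(ε, ε'), ?_, ?_⟩
      · rw [hPrAll, Finset.mem_filter]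
        refine ⟨Finset.mem_univ _, ⟨j, ?_, ?_⟩⟩
        · exact hεj
        · exact hε'j
      · rw [hB', Finset.mem_filter]
        refine ⟨hqK, ?_⟩
        exact heq
    · have hε'j : ε' j = true := by
        cases hε'j : ε' j
        · exact absurd (hεj.trans hε'j.symm) hj
        · rfl
      refine Finset.mem_biUnion.mpr ⟨(ε', ε), ?_, ?_⟩
      · rw [hPrAll, Finset.mem_filter]
        refine ⟨Finset.mem_univ _, ⟨j, ?_, ?_⟩⟩
        · exact hε'j
        · exact hεj
      · rw [hB', Finset.mem_filter]
        refine ⟨hqK, ?_⟩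
        exact heq.symm
  have hB'card : ∀ p ∈ PrAll,
      (Fintype.card ((Fin s → Bool) × (Fin s → Bool)) + 1) * (B' p).card ≤ K.card := by
    intro p hp
    rw [hPrAll, Finset.mem_filter] at hp
    obtain ⟨-, j₀, hp1, hp2⟩ := hp
    set c₀ : Fin (s + s) := Fin.natAdd s j₀ with hc₀
    set π : ((∀ c, Fin (n c)) × (∀ c, Fin (n c))) → ((∀ c, Fin (n c)) × (∀ c, Fin (n c))) :=
      fun q => (q.1, Function.update q.2 c₀ (q.1 c₀)) with hπ
    have hinj : Set.InjOn π (B' p) := by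
      intro q hq q' hq' hππ
      rw [hB', Finset.mem_coe, Finset.mem_filter] at hq hq'
      simp only [hπ, Prod.mk.injEq] at hππ
      obtain ⟨hq1, hupd⟩ := hππ
      have hoth : ∀ c, c ≠ c₀ → q.2 c = q'.2 c := by
        intro c hc
        have h := congrFun hupd c
        rwa [Function.update_of_ne hc, Function.update_of_ne hc] at h
      have h2 : q.2 c₀ = q'.2 c₀ := by
        by_contra hne2
        have hwε' : vmap n q.1 q.2 p.2 = vmap n q'.1 q'.2 p.2 := by
          funext c
          simp only [vmap]
          by_cases hc : c = c₀
          · subst hc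
            rw [hc₀, blk_natAdd, hp2]
            simp [hq1]
          · by_cases hb2 : p.2 (blk c) = true <;> simp [hb2, hoth c hc, hq1]
        have hχq : χ (pt b α n (vmap n q.1 q.2 p.1)) = χ (pt b α n (vmap n q'.1 q'.2 p.1)) := by
          rw [hq.2, hwε']
          exact hq'.2.symm
        have hwdiff : ∀ c, c ≠ c₀ → vmap n q.1 q.2 p.1 c = vmap n q'.1 q'.2 p.1 c := by
          intro c hc
          simp only [vmap]
          by_cases hb1 : p.1 (blk c) = true <;> simp [hb1, hoth c hc, hq1]
        have hwc₀ : vmap n q.1 q.2 p.1 c₀ ≠ vmap n q'.1 q'.2 p.1 c₀ := by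
          simp only [vmap]
          rw [hc₀, blk_natAdd, hp1]
          simpa using hne2
        have hdist := dist_pt_single b α n hb hα hαb _ _ j₀ hwc₀ hwdiff
        have hχ₀eq : χ₀ (pt b α n (vmap n q.1 q.2 p.1)) = χ₀ (pt b α n (vmap n q'.1 q'.2 p.1)) :=
          hAconst _ _ (hvmem q hq.1 p.1) (hvmem q' hq'.1 p.1)
        exact (hLft _ _ hdist hχ₀eq) hχq
      have h22 : q.2 = q'.2 := funext fun c => by
        by_cases hc : c = c₀
        · rw [hc]; exact h2
        · exact hoth c hc
      exact Prod.ext hq1 h22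
    have hmapsto : ∀ q ∈ B' p, π q ∈ K.image π := by
      intro q hq
      rw [hB', Finset.mem_filter] at hq
      exact Finset.mem_image_of_mem π hq.1
    have hcard1 : (B' p).card ≤ (K.image π).card :=
      Finset.card_le_card_of_injOn π hmapsto hinj
    have hfiber : ∀ p' ∈ K.image π,
        Fintype.card ((Fin s → Bool) × (Fin s → Bool)) + 1 ≤
          (K.filter (fun q => π q = p')).card := by
      intro p' hp'
      obtain ⟨q₀, hq₀K, rfl⟩ := Finset.mem_image.mp hp'
      have hle : ((A c₀).erase (q₀.1 c₀)).card ≤ (K.filter (fun q => π q = π q₀)).card := by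
        apply Finset.card_le_card_of_injOn (fun kv => (q₀.1, Function.update q₀.2 c₀ kv))
        · intro kv hkv
          rw [Finset.mem_coe, Finset.mem_erase] at hkv
          refine Finset.mem_coe.mpr (Finset.mem_filter.mpr ⟨hKmem.mpr fun c => ?_, ?_⟩)
          · show q₀.1 c ∈ A c ∧ Function.update q₀.2 c₀ kv c ∈ A c ∧
              q₀.1 c ≠ Function.update q₀.2 c₀ kv c
            by_cases hc : c = c₀
            · subst hc
              refine ⟨(hKmem.mp hq₀K c₀).1, ?_, ?_⟩
              · rw [Function.update_self]; exact hkv.2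
              · rw [Function.update_self]; exact fun h => hkv.1 h.symm
            · rw [Function.update_of_ne hc]
              exact hKmem.mp hq₀K c
          · show (q₀.1, Function.update (Function.update q₀.2 c₀ kv) c₀ (q₀.1 c₀)) =
              (q₀.1, Function.update q₀.2 c₀ (q₀.1 c₀))
            rw [Function.update_idem]
        · intro kv _ kv' _ heq
          have h := congrFun (congrArg Prod.snd heq) c₀
          simpa using h
      calc Fintype.card ((Fin s → Bool) × (Fin s → Bool)) + 1
          ≤ (A c₀).card - 1 := by have := hAcard c₀; omega
        _ = ((A c₀).erase (q₀.1 c₀)).card :=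
            (Finset.card_erase_of_mem (hKmem.mp hq₀K c₀).1).symm
        _ ≤ _ := hle
    have hKcard : (Fintype.card ((Fin s → Bool) × (Fin s → Bool)) + 1) * (K.image π).card ≤
        K.card := by
      have hsum : K.card = ∑ p' ∈ K.image π, (K.filter (fun q => π q = p')).card :=
        Finset.card_eq_sum_card_fiberwise (fun q hq => Finset.mem_image_of_mem π hq)
      calc (Fintype.card ((Fin s → Bool) × (Fin s → Bool)) + 1) * (K.image π).card
          = ∑ _p' ∈ K.image π, (Fintype.card ((Fin s → Bool) × (Fin s → Bool)) + 1) := by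
            rw [Finset.sum_const, smul_eq_mul, mul_comm]
        _ ≤ ∑ p' ∈ K.image π, (K.filter (fun q => π q = p')).card := Finset.sum_le_sum hfiber
        _ = K.card := hsum.symm
    calc (Fintype.card ((Fin s → Bool) × (Fin s → Bool)) + 1) * (B' p).card
        ≤ (Fintype.card ((Fin s → Bool) × (Fin s → Bool)) + 1) * (K.image π).card :=
          Nat.mul_le_mul_left _ hcard1
      _ ≤ K.card := hKcard
  have hKpos : 0 < K.card := Finset.card_pos.mpr ⟨_, hKne⟩
  have hBK : B.card < K.card := by
    have h1 : B.card ≤ ∑ p ∈ PrAll, (B' p).card :=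
      le_trans (Finset.card_le_card hcover) Finset.card_biUnion_le
    have h3 : ∑ p ∈ PrAll, (Fintype.card ((Fin s → Bool) × (Fin s → Bool)) + 1) * (B' p).card ≤
        PrAll.card * K.card := by
      calc ∑ p ∈ PrAll, (Fintype.card ((Fin s → Bool) × (Fin s → Bool)) + 1) * (B' p).card
          ≤ ∑ _p ∈ PrAll, K.card := Finset.sum_le_sum hB'card
        _ = PrAll.card * K.card := by rw [Finset.sum_const, smul_eq_mul]
    have h4 : PrAll.card ≤ Fintype.card ((Fin s → Bool) × (Fin s → Bool)) := by
      rw [hPrAll]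
      exact le_trans (Finset.card_filter_le _ _) (by rw [Finset.card_univ])
    have h5 : (Fintype.card ((Fin s → Bool) × (Fin s → Bool)) + 1) * B.card ≤
        PrAll.card * K.card := by
      calc (Fintype.card ((Fin s → Bool) × (Fin s → Bool)) + 1) * B.card
          ≤ (Fintype.card ((Fin s → Bool) × (Fin s → Bool)) + 1) * ∑ p ∈ PrAll, (B' p).card :=
            Nat.mul_le_mul_left _ h1
        _ = ∑ p ∈ PrAll, (Fintype.card ((Fin s → Bool) × (Fin s → Bool)) + 1) * (B' p).card :=
            Finset.mul_sum _ _ _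
        _ ≤ PrAll.card * K.card := h3
    have h6 : PrAll.card * K.card <
        (Fintype.card ((Fin s → Bool) × (Fin s → Bool)) + 1) * K.card := by
      apply Nat.mul_lt_mul_of_lt_of_le (by omega) le_rfl hKpos
    exact Nat.lt_of_mul_lt_mul_left (lt_of_le_of_lt h5 h6)
  obtain ⟨q, hqK, hqB⟩ : ∃ q ∈ K, q ∉ B := by
    by_contra hco
    push_neg at hco
    exact absurd (Finset.card_le_card hco) (not_le.mpr hBK)
  have hgood : ¬∃ ε ε' : Fin s → Bool, ε ≠ ε' ∧
      χ (pt b α n (vmap n q.1 q.2 ε)) = χ (pt b α n (vmap n q.1 q.2 ε')) := by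
    intro hex
    exact hqB (by rw [hB, Finset.mem_filter]; exact ⟨hqK, hex⟩)
  have hqne : ∀ c, q.1 c ≠ q.2 c := fun c => (hKmem.mp hqK c).2.2
  refine ⟨bmap b α n q.1 q.2, bmap_isometry b α n hb hα hαb q.1 q.2 hqne, ?_, ?_, ?_⟩
  · rw [bmap_image b α n hb q.1 q.2]
    rintro x ⟨ε, rfl⟩
    exact ⟨vmap n q.1 q.2 ε, rfl⟩
  · rw [bmap_image b α n hb q.1 q.2]
    rintro x ⟨ε, rfl⟩ y ⟨ε', rfl⟩
    exact hAconst _ _ (hvmem q hqK ε) (hvmem q hqK ε')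
  · rw [bmap_image b α n hb q.1 q.2]
    rintro x ⟨ε, rfl⟩ y ⟨ε', rfl⟩ hxy
    by_cases hεε : ε = ε'
    · rw [hεε]
    · exact absurd ⟨ε, ε', hεε, hxy⟩ hgood

-- transport helpers + lemA
noncomputable def padMap (ι : Type) [Fintype ι] :
    EuclideanSpace ℝ ι → EuclideanSpace ℝ (ι ⊕ Fin 1) :=
  fun x => WithLp.toLp 2 (Sum.elim x.ofLp (fun _ => 0))

lemma pad_isometry (ι : Type) [Fintype ι] : Isometry (padMap ι) := by
  refine Isometry.of_dist_eq fun x y => ?_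
  rw [EuclideanSpace.dist_eq, EuclideanSpace.dist_eq]
  congr 1
  rw [Fintype.sum_sum_type]
  simp [padMap]

lemma lemA (s : ℕ) (b : Fin s → ℝ) (hb : ∀ j, 0 < b j) (α : ℝ) (hα : 0 < α)
    (hαb : ∀ j, α ≤ b j) (κ₀ : Type) [Fintype κ₀] :
    ∃ N : ℕ, 0 < N ∧ ∃ T : Finset (EuclideanSpace ℝ (Fin N)), T.Nonempty ∧
      ∀ (χ₀ : EuclideanSpace ℝ (Fin N) → κ₀) (κ : Type) (χ : EuclideanSpace ℝ (Fin N) → κ),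
        (∃ y₁ ∈ T, ∃ y₂ ∈ T, dist y₁ y₂ = α ∧ χ₀ y₁ = χ₀ y₂ ∧ χ y₁ = χ y₂) ∨
        (∃ Y ⊆ (T : Set (EuclideanSpace ℝ (Fin N))), IsCopy (cuboid b) Y ∧
          Monochromatic χ₀ Y ∧ RainbowSet χ Y) := by
  classical
  obtain ⟨n, hnpos, hcore⟩ := lemA_core s b hb α hα hαb κ₀
  set ι₀ := (c : Fin (s + s)) × Fin (n c) with hι₀
  set N := Fintype.card (ι₀ ⊕ Fin 1) with hN
  have hNpos : 0 < N := Fintype.card_pos_iff.mpr ⟨Sum.inr 0⟩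
  set e : (ι₀ ⊕ Fin 1) ≃ Fin N := Fintype.equivFin _ with he
  set Φ := LinearIsometryEquiv.piLpCongrLeft 2 ℝ (E := ℝ) e with hΦ
  set g : EuclideanSpace ℝ ι₀ → EuclideanSpace ℝ (Fin N) := fun x => Φ (padMap ι₀ x) with hg
  have hgiso : Isometry g := Φ.isometry.comp (pad_isometry ι₀)
  have hginj : Function.Injective g := hgiso.injective
  refine ⟨N, hNpos, Finset.image (fun f => g (pt b α n f)) Finset.univ, ?_, ?_⟩
  · refine ⟨g (pt b α n fun c => ⟨0, hnpos c⟩), ?_⟩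
    exact Finset.mem_image_of_mem _ (Finset.mem_univ _)
  intro χ₀ κ χ
  rcases hcore (fun z => χ₀ (g z)) κ (fun z => χ (g z)) with
    ⟨f, f', hdist, hχ₀, hχ⟩ | ⟨F, hFiso, hFsub, hFmono, hFrain⟩
  · left
    refine ⟨g (pt b α n f), Finset.mem_image_of_mem _ (Finset.mem_univ _),
      g (pt b α n f'), Finset.mem_image_of_mem _ (Finset.mem_univ _), ?_, hχ₀, hχ⟩
    rw [hgiso.dist_eq]
    exact hdist
  · right
    refine ⟨g '' (F '' cuboid b), ?_, ⟨g ∘ F, hgiso.comp hFiso, (Set.image_comp g F _).symm⟩,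
      ?_, ?_⟩
    · rintro z ⟨y, hy, rfl⟩
      obtain ⟨f, rfl⟩ := hFsub hy
      exact Finset.mem_coe.mpr (Finset.mem_image_of_mem _ (Finset.mem_univ _))
    · rintro z ⟨y, hy, rfl⟩ z' ⟨y', hy', rfl⟩
      exact hFmono y hy y' hy'
    · rintro z ⟨y, hy, rfl⟩ z' ⟨y', hy', rfl⟩ hzz
      exact congrArg g (hFrain hy hy' hzz)

lemma extend_copy {t' N₁ N₂ : ℕ} (a' : Fin (t' + 1) → ℝ) (hα : 0 < a' (Fin.last t'))
    (f' : EuclideanSpace ℝ (Fin t') → EuclideanSpace ℝ (Fin N₁)) (hf' : Isometry f')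
    (y₁ y₂ : EuclideanSpace ℝ (Fin N₂)) (hdist : dist y₁ y₂ = a' (Fin.last t')) :
    ∃ F : EuclideanSpace ℝ (Fin (t' + 1)) → EuclideanSpace ℝ (Fin (N₁ + N₂)),
      Isometry F ∧
      F '' cuboid a' =
        (fun p => conc p y₁) '' (f' '' cuboid (fun j : Fin t' => a' j.castSucc)) ∪
        (fun p => conc p y₂) '' (f' '' cuboid (fun j : Fin t' => a' j.castSucc)) := by
  classical
  set α := a' (Fin.last t') with hαdef
  set v : EuclideanSpace ℝ (Fin N₂) := y₂ - y₁ with hv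
  set F : EuclideanSpace ℝ (Fin (t' + 1)) → EuclideanSpace ℝ (Fin (N₁ + N₂)) :=
    fun z => conc (f' (WithLp.toLp 2 (Fin.init z))) (y₁ + (z (Fin.last t') / α) • v) with hF
  have hnv : ‖v‖ = α := by
    rw [hv, norm_sub_rev, ← dist_eq_norm, hdist]
  have hFat : ∀ (u : EuclideanSpace ℝ (Fin t')) (r : ℝ),
      F (WithLp.toLp 2 (Fin.snoc u.ofLp r)) = conc (f' u) (y₁ + (r / α) • v) := by
    intro u r
    rw [hF]
    simp only [WithLp.ofLp_toLp, Fin.init_snoc, Fin.snoc_last, WithLp.toLp_ofLp]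
  refine ⟨F, ?_, ?_⟩
  · refine Isometry.of_dist_eq fun z w => ?_
    rw [hF]
    simp only
    rw [dist_conc, hf'.dist_eq]
    have h2 : dist (y₁ + (z (Fin.last t') / α) • v) (y₁ + (w (Fin.last t') / α) • v) =
        |z (Fin.last t') - w (Fin.last t')| := by
      rw [dist_add_left, dist_eq_norm, ← sub_smul, norm_smul, Real.norm_eq_abs, hnv,
        div_sub_div_same, abs_div, abs_of_pos hα, div_mul_cancel₀]
      exact hα.ne'
    rw [h2, EuclideanSpace.dist_eq z w, Fin.sum_univ_castSucc (f := fun i => dist (z i) (w i) ^ 2)]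
    congr 1
    congr 1
    rw [EuclideanSpace.dist_eq (WithLp.toLp 2 (Fin.init z)) (WithLp.toLp 2 (Fin.init w)), Real.sq_sqrt (by positivity)]
    exact Finset.sum_congr rfl fun i _ => rfl
  · apply Set.eq_of_subset_of_subset
    · rintro p ⟨z, hz, rfl⟩
      have hinit : WithLp.toLp 2 (Fin.init z) ∈ cuboid (fun j : Fin t' => a' j.castSucc) := by
        intro j
        exact hz j.castSucc
      rcases hz (Fin.last t') with h0 | h1
      · left
        refine ⟨f' (WithLp.toLp 2 (Fin.init z)), Set.mem_image_of_mem _ hinit, ?_⟩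
        rw [hF]
        simp only [h0]
        rw [zero_div, zero_smul, add_zero]
      · right
        refine ⟨f' (WithLp.toLp 2 (Fin.init z)), Set.mem_image_of_mem _ hinit, ?_⟩
        rw [hF]
        simp only [h1]
        rw [← hαdef, div_self hα.ne', one_smul, hv, add_sub_cancel]
    · rintro p (⟨q, ⟨u, hu, rfl⟩, rfl⟩ | ⟨q, ⟨u, hu, rfl⟩, rfl⟩)
      · refine ⟨WithLp.toLp 2 (Fin.snoc u.ofLp 0), ?_, ?_⟩
        · intro i
          refine Fin.lastCases ?_ ?_ i
          · left; rw [WithLp.ofLp_toLp, Fin.snoc_last]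
          · intro j
            rw [WithLp.ofLp_toLp, Fin.snoc_castSucc]
            exact hu j
        · rw [hFat u 0, zero_div, zero_smul, add_zero]
      · refine ⟨WithLp.toLp 2 (Fin.snoc u.ofLp α), ?_, ?_⟩
        · intro i
          refine Fin.lastCases ?_ ?_ i
          · right; rw [WithLp.ofLp_toLp, Fin.snoc_last, hαdef]
          · intro j
            rw [WithLp.ofLp_toLp, Fin.snoc_castSucc]
            exact hu j
        · rw [hFat u α, div_self hα.ne', one_smul, hv, add_sub_cancel]
lemma Lrec (s : ℕ) (b : Fin s → ℝ) (hb : ∀ j, 0 < b j) (t' : ℕ) :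
    ∀ (a' : Fin t' → ℝ), (∀ i, 0 < a' i) → (∀ i j, a' i ≤ b j) →
    ∀ (κ₀ : Type) [Fintype κ₀],
    ∃ N : ℕ, 0 < N ∧ ∃ T : Finset (EuclideanSpace ℝ (Fin N)),
      ∀ (χ₀ : EuclideanSpace ℝ (Fin N) → κ₀) (κ : Type) (χ : EuclideanSpace ℝ (Fin N) → κ),
        (∃ X ⊆ (T : Set (EuclideanSpace ℝ (Fin N))), IsCopy (cuboid a') X ∧
          Monochromatic χ₀ X ∧ Monochromatic χ X) ∨
        (∃ X ⊆ (T : Set (EuclideanSpace ℝ (Fin N))), IsCopy (cuboid b) X ∧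
          Monochromatic χ₀ X ∧ RainbowSet χ X) := by
  classical
  induction t' with
  | zero =>
      intro a' _ _ κ₀ _
      refine ⟨1, one_pos, {(0 : EuclideanSpace ℝ (Fin 1))}, ?_⟩
      intro χ₀ κ χ
      left
      have hsub : ∀ x y : EuclideanSpace ℝ (Fin 0), x = y := by
        intro x y; ext i; exact i.elim0
      have hcub : cuboid a' = Set.univ := Set.eq_univ_iff_forall.mpr fun z i => i.elim0
      refine ⟨{(0 : EuclideanSpace ℝ (Fin 1))}, by simp, ?_, ?_, ?_⟩
      · refine ⟨fun _ => (0 : EuclideanSpace ℝ (Fin 1)), ?_, ?_⟩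
        · refine Isometry.of_dist_eq fun x y => ?_
          rw [hsub x y]
          simp
        · rw [hcub, Set.image_univ, Set.range_const]
      · intro x hx y hy
        rw [Set.mem_singleton_iff] at hx hy
        rw [hx, hy]
      · intro x hx y hy
        rw [Set.mem_singleton_iff] at hx hy
        rw [hx, hy]
  | succ t ih =>
      intro a' ha' hab' κ₀ _
      set α := a' (Fin.last t) with hαdef
      have hα : 0 < α := ha' _
      obtain ⟨N₂, hN₂, T₂, hT₂ne, propA⟩ := lemA s b hb α hα (fun j => hab' _ j) κ₀
      obtain ⟨N₁, hN₁, T₁, propL⟩ := ih (fun j => a' j.castSucc) (fun i => ha' _)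
        (fun i j => hab' _ j) (κ₀ × ({ y // y ∈ T₂ } × { y // y ∈ T₂ }))
      refine ⟨N₁ + N₂, by omega, Finset.image₂ conc T₁ T₂, ?_⟩
      intro χ₀ κ χ
      by_cases hQ : ∀ x ∈ T₁, ∃ y₁ ∈ T₂, ∃ y₂ ∈ T₂, dist y₁ y₂ = α ∧
          χ₀ (conc x y₁) = χ₀ (conc x y₂) ∧ χ (conc x y₁) = χ (conc x y₂)
      · obtain ⟨y₀, hy₀⟩ := hT₂ne
        have hch : ∀ x : EuclideanSpace ℝ (Fin N₁), ∃ y₁ y₂, y₁ ∈ T₂ ∧ y₂ ∈ T₂ ∧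
            (x ∈ T₁ → dist y₁ y₂ = α ∧ χ₀ (conc x y₁) = χ₀ (conc x y₂) ∧
              χ (conc x y₁) = χ (conc x y₂)) := by
          intro x
          by_cases hx : x ∈ T₁
          · obtain ⟨y₁, h₁, y₂, h₂, hrest⟩ := hQ x hx
            exact ⟨y₁, y₂, h₁, h₂, fun _ => hrest⟩
          · exact ⟨y₀, y₀, hy₀, hy₀, fun h => absurd h hx⟩
        choose Y₁ Y₂ hY₁ hY₂ hYprop using hch
        set χ₀' : EuclideanSpace ℝ (Fin N₁) → κ₀ × ({ y // y ∈ T₂ } × { y // y ∈ T₂ }) :=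
          fun x => (χ₀ (conc x (Y₁ x)), (⟨Y₁ x, hY₁ x⟩, ⟨Y₂ x, hY₂ x⟩)) with hχ₀'
        set χ' : EuclideanSpace ℝ (Fin N₁) → κ := fun x => χ (conc x (Y₁ x)) with hχ'
        have hPconst : ∀ X' : Set (EuclideanSpace ℝ (Fin N₁)), Monochromatic χ₀' X' →
            ∀ x₀ ∈ X', ∀ x ∈ X', Y₁ x = Y₁ x₀ ∧ Y₂ x = Y₂ x₀ := by
          intro X' hm x₀ hx₀ x hx
          have h := hm x hx x₀ hx₀
          have h2 := congrArg Prod.snd h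
          constructor
          · exact congrArg (fun z => (z.1 : EuclideanSpace ℝ (Fin N₂))) h2
          · exact congrArg (fun z => (z.2 : EuclideanSpace ℝ (Fin N₂))) h2
        rcases propL χ₀' κ χ' with ⟨X', hX'sub, hcopy', hm₀', hm'⟩ |
          ⟨X', hX'sub, hcopy', hm₀', hr'⟩
        · -- monochromatic cuboid
          obtain ⟨f', hf'iso, hf'img⟩ := hcopy'
          have hX'ne : X'.Nonempty := by
            rw [hf'img]
            exact ⟨f' 0, Set.mem_image_of_mem _ (fun i => Or.inl rfl)⟩
          obtain ⟨x₀, hx₀⟩ := hX'ne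
          have hx₀T : x₀ ∈ T₁ := hX'sub hx₀
          have hud := hYprop x₀ hx₀T
          obtain ⟨F, hFiso, hFimg⟩ := extend_copy a' hα f' hf'iso (Y₁ x₀) (Y₂ x₀) hud.1
          set X : Set (EuclideanSpace ℝ (Fin (N₁ + N₂))) :=
            (fun p => conc p (Y₁ x₀)) '' X' ∪ (fun p => conc p (Y₂ x₀)) '' X' with hX
          have hXeq : F '' cuboid a' = X := by
            rw [hFimg, hX, hf'img]
          have hkey : ∀ x ∈ X', χ₀ (conc x (Y₁ x₀)) = χ₀ (conc x₀ (Y₁ x₀)) ∧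
              χ₀ (conc x (Y₂ x₀)) = χ₀ (conc x₀ (Y₁ x₀)) ∧
              χ (conc x (Y₁ x₀)) = χ (conc x₀ (Y₁ x₀)) ∧
              χ (conc x (Y₂ x₀)) = χ (conc x₀ (Y₁ x₀)) := by
            intro x hx
            obtain ⟨hp1, hp2⟩ := hPconst X' hm₀' x₀ hx₀ x hx
            have hxT : x ∈ T₁ := hX'sub hx
            have hx1 : χ₀ (conc x (Y₁ x₀)) = χ₀ (conc x₀ (Y₁ x₀)) := by
              have := congrArg Prod.fst (hm₀' x hx x₀ hx₀)
              simpa [hχ₀', hp1] using this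
            have hx2 : χ (conc x (Y₁ x₀)) = χ (conc x₀ (Y₁ x₀)) := by
              have := hm' x hx x₀ hx₀
              simpa [hχ', hp1] using this
            have hpair := hYprop x hxT
            have hx3 : χ₀ (conc x (Y₂ x₀)) = χ₀ (conc x (Y₁ x₀)) := by
              have := hpair.2.1
              rw [hp1, hp2] at this
              exact this.symm
            have hx4 : χ (conc x (Y₂ x₀)) = χ (conc x (Y₁ x₀)) := by
              have := hpair.2.2
              rw [hp1, hp2] at this
              exact this.symm
            exact ⟨hx1, hx3.trans hx1, hx2, hx4.trans hx2⟩
          left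
          refine ⟨X, ?_, ⟨F, hFiso, hXeq.symm⟩, ?_, ?_⟩
          · rintro p (⟨x, hx, rfl⟩ | ⟨x, hx, rfl⟩)
            · exact Finset.mem_coe.mpr
                (Finset.mem_image₂_of_mem (Finset.mem_coe.mp (hX'sub hx)) (hY₁ x₀))
            · exact Finset.mem_coe.mpr
                (Finset.mem_image₂_of_mem (Finset.mem_coe.mp (hX'sub hx)) (hY₂ x₀))
          · rintro p (⟨x, hx, rfl⟩ | ⟨x, hx, rfl⟩) p' (⟨x', hx', rfl⟩ | ⟨x', hx', rfl⟩)
            · exact ((hkey x hx).1).trans ((hkey x' hx').1).symm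
            · exact ((hkey x hx).1).trans ((hkey x' hx').2.1).symm
            · exact ((hkey x hx).2.1).trans ((hkey x' hx').1).symm
            · exact ((hkey x hx).2.1).trans ((hkey x' hx').2.1).symm
          · rintro p (⟨x, hx, rfl⟩ | ⟨x, hx, rfl⟩) p' (⟨x', hx', rfl⟩ | ⟨x', hx', rfl⟩)
            · exact ((hkey x hx).2.2.1).trans ((hkey x' hx').2.2.1).symm
            · exact ((hkey x hx).2.2.1).trans ((hkey x' hx').2.2.2).symm
            · exact ((hkey x hx).2.2.2).trans ((hkey x' hx').2.2.1).symm
            · exact ((hkey x hx).2.2.2).trans ((hkey x' hx').2.2.2).symm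
        · -- rainbow cuboid b
          have hX'ne : X'.Nonempty := by
            obtain ⟨f', hf'iso, hf'img⟩ := hcopy'
            rw [hf'img]
            exact ⟨f' 0, Set.mem_image_of_mem _ (fun i => Or.inl rfl)⟩
          obtain ⟨x₀, hx₀⟩ := hX'ne
          right
          refine ⟨(fun p => conc p (Y₁ x₀)) '' X', ?_,
            hcopy'.image_isometry (isometry_conc_right (Y₁ x₀)), ?_, ?_⟩
          · rintro p ⟨x, hx, rfl⟩
            exact Finset.mem_coe.mpr
              (Finset.mem_image₂_of_mem (Finset.mem_coe.mp (hX'sub hx)) (hY₁ x₀))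
          · rintro p ⟨x, hx, rfl⟩ p' ⟨x', hx', rfl⟩
            have e1 : χ₀ (conc x (Y₁ x₀)) = (χ₀' x).1 := by
              simp only [hχ₀', (hPconst X' hm₀' x₀ hx₀ x hx).1]
            have e2 : χ₀ (conc x' (Y₁ x₀)) = (χ₀' x').1 := by
              simp only [hχ₀', (hPconst X' hm₀' x₀ hx₀ x' hx').1]
            rw [e1, e2, congrArg Prod.fst (hm₀' x hx x' hx')]
          · rintro p ⟨x, hx, rfl⟩ p' ⟨x', hx', rfl⟩ hpp
            have e1 : χ (conc x (Y₁ x₀)) = χ' x := by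
              simp only [hχ', (hPconst X' hm₀' x₀ hx₀ x hx).1]
            have e2 : χ (conc x' (Y₁ x₀)) = χ' x' := by
              simp only [hχ', (hPconst X' hm₀' x₀ hx₀ x' hx').1]
            have : χ' x = χ' x' := by rw [← e1, ← e2]; exact hpp
            rw [hr' hx hx' this]
      · push_neg at hQ
        obtain ⟨x₀, hx₀T, hno⟩ := hQ
        rcases propA (fun y => χ₀ (conc x₀ y)) κ (fun y => χ (conc x₀ y)) with
          ⟨y₁, h₁, y₂, h₂, hd, he₀, he⟩ | ⟨Y, hYsub, hYcopy, hYm, hYr⟩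
        · exact absurd he (hno y₁ h₁ y₂ h₂ hd he₀)
        · right
          refine ⟨(fun y => conc x₀ y) '' Y, ?_,
            hYcopy.image_isometry (isometry_conc_left x₀), ?_, ?_⟩
          · rintro p ⟨y, hy, rfl⟩
            exact Finset.mem_coe.mpr
              (Finset.mem_image₂_of_mem hx₀T (Finset.mem_coe.mp (hYsub hy)))
          · rintro p ⟨y, hy, rfl⟩ p' ⟨y', hy', rfl⟩
            exact hYm y hy y' hy'
          · rintro p ⟨y, hy, rfl⟩ p' ⟨y', hy', rfl⟩ hpp
            rw [hYr hy hy' hpp]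
/-- **The key product construction.** Let `R = {0,b₁} × ⋯ × {0,bₛ}` be a cuboid and
`a₁, …, aₜ` positive reals each at most `min{b₁,…,bₛ}`. Then there is a finite
configuration `S ⊆ ℝᴺ` such that every colouring of `S` (with arbitrarily many
colours) admits a monochromatic copy of `{0,a₁} × ⋯ × {0,aₜ}` or a rainbow copy
of `R`. -/
theorem exists_config_mono_cuboid_or_rainbow_cuboid (s : ℕ) (hs : 0 < s)
    (b : Fin s → ℝ) (hb : ∀ i, 0 < b i)
    (t : ℕ) (ht : 0 < t) (a : Fin t → ℝ) (ha : ∀ i, 0 < a i)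
    (hab : ∀ i j, a i ≤ b j) :
    ∃ N : ℕ, 0 < N ∧ ∃ S : Set (EuclideanSpace ℝ (Fin N)), S.Finite ∧
      ∀ (κ : Type) (χ : EuclideanSpace ℝ (Fin N) → κ),
        (∃ X ⊆ S, IsCopy (cuboid a) X ∧ Monochromatic χ X) ∨
        (∃ X ⊆ S, IsCopy (cuboid b) X ∧ RainbowSet χ X) := by
  obtain ⟨N, hN, T, prop⟩ := Lrec s b hb t a ha hab Unit
  refine ⟨N, hN, (T : Set (EuclideanSpace ℝ (Fin N))), T.finite_toSet, ?_⟩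
  intro κ χ
  rcases prop (fun _ => ()) κ χ with ⟨X, hsub, hcopy, _, hmono⟩ | ⟨X, hsub, hcopy, _, hrain⟩
  · exact Or.inl ⟨X, hsub, hcopy, hmono⟩
  · exact Or.inr ⟨X, hsub, hcopy, hrain⟩
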